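/- Fix t ∈ [0,1), n with 2^N ≤ n < 2^{N+1}, n = 2^N + n' with n' < 2^N, and m = ∑_{i=0}^{N−1} t_{i+1} 2^i. The Lebesgue constant of the conjugate transform equals L_n^{(t)} = ∑_{i=0}^{N−1} max(α_i(n), 2α_i(m))/2^{i+1} + |2^{N+1} − n − 2m + 2 t_{N+1}(n − 2^N)|/2^{N+1} + |n − 2m − 2 t_{N+1}(n − 2^N)|/2^{N+1}. -/

import Mathlib

open MeasureTheory Finset

noncomputable section

/-- The dyadic group: countable product of ℤ/2. -/
abbrev G := ℕ → ZMod 2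

/-- Binary digits of a real number, as an element of the dyadic group. -/
def toG (x : ℝ) : G := fun n => ((⌊x * 2 ^ (n + 1)⌋ : ℤ) : ZMod 2)

/-- Haar (product) measure on the dyadic group, realized as the pushforward
of Lebesgue measure on `[0,1)` under the binary digit map. -/
def muG : Measure G := (volume.restrict (Set.Ico (0:ℝ) 1)).map toG

/-- Walsh–Paley functions. -/
def walsh (m : ℕ) (x : G) : ℝ :=
  ∏ k ∈ Finset.range m, if m.testBit k then (-1 : ℝ) ^ ((x k).val) else 1

/-- Walsh–Dirichlet kernel. -/
def Dir (n : ℕ) (x : G) : ℝ := ∑ k ∈ Finset.range n, walsh k x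

/-- Dyadic interval `I_n` of rank `n` about `0`. -/
def Iset (n : ℕ) : Set G := {x | ∀ i < n, x i = 0}

/-- `k`-th binary digit of `n`, as a natural number. -/
def bit (n k : ℕ) : ℕ := (n.testBit k).toNat

/-- `α_i(n) = |∑_{k<i} n_k 2^k − n_i 2^i|`. -/
def alpha (n i : ℕ) : ℤ :=
  |(∑ k ∈ Finset.range i, (bit n k : ℤ) * 2 ^ k) - (bit n i : ℤ) * 2 ^ i|

/-- Binary variation `V(n) = n_0 + ∑_{k≥1} |n_k − n_{k−1}|`. -/
def V (n : ℕ) : ℕ :=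
  bit n 0 + ∑ k ∈ Finset.range n, if n.testBit (k+1) ≠ n.testBit k then 1 else 0

/-- `A(n)`: indices where consecutive binary digits differ (with `n_{−1} = 0`). -/
def Aset (n : ℕ) : Finset ℕ :=
  (Finset.range (n+1)).filter
    (fun i => if i = 0 then n.testBit 0 else n.testBit i ≠ n.testBit (i-1))

/-- `S(n) = ∑_{i ∈ A(n)} α_i(n)/2^{i+1}`. -/
def S (n : ℕ) : ℝ := ∑ i ∈ Aset n, (alpha n i : ℝ) / 2 ^ (i+1)

/-- `j`-th binary digit of a real number `t ∈ [0,1)`. -/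
def tdig (t : ℝ) (j : ℕ) : ℕ := (⌊t * 2 ^ (j+1)⌋ % 2).toNat

/-- `m = ∑_{i=0}^{N-1} t_{i+1} 2^i`. -/
def mOf (t : ℝ) (N : ℕ) : ℕ := ∑ i ∈ Finset.range N, tdig t (i+1) * 2 ^ i

/-- Conjugate Walsh–Dirichlet kernel
`D̃_n^{(t)} = D_n − 2 w_m D_m − 2 t_{N+1}(D_n − D_{2^N})` where `m = mOf t N`. -/
def Dconj (t : ℝ) (N n : ℕ) (x : G) : ℝ :=
  Dir n x - 2 * walsh (mOf t N) x * Dir (mOf t N) x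
    - 2 * (tdig t (N+1) : ℝ) * (Dir n x - Dir (2^N) x)

/-- Lebesgue constant of the conjugate transform. -/
def Leb (t : ℝ) (N n : ℕ) : ℝ := ∫ x, |Dconj t N n x| ∂muG

/-- `T(a,b) = {i : 1 ≤ i ≤ N−1, a_i ≠ a_{i−1}, b_i = b_{i−1}}`. -/
def Tset (N a b : ℕ) : Finset ℕ :=
  (Finset.Icc 1 (N-1)).filter
    (fun i => a.testBit i ≠ a.testBit (i-1) ∧ b.testBit i = b.testBit (i-1))

-- ### basic walsh lemmas

lemma walsh_eq_range (m B : ℕ) (h : m < 2^B) (x : G) :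
    walsh m x = ∏ k ∈ Finset.range B, if m.testBit k then (-1 : ℝ) ^ ((x k).val) else 1 := by
  unfold walsh
  rcases le_total m B with hmB | hmB
  · exact Finset.prod_subset (Finset.range_subset_range.2 hmB) (by
      intro k _ hk
      simp only [Finset.mem_range, not_lt] at hk
      rw [Nat.testBit_lt_two_pow (lt_of_lt_of_le (Nat.lt_two_pow_self (n := m)) (Nat.pow_le_pow_right (by norm_num) hk))]
      simp)
  · exact (Finset.prod_subset (Finset.range_subset_range.2 hmB) (by
      intro k _ hk
      simp only [Finset.mem_range, not_lt] at hk
      rw [Nat.testBit_lt_two_pow (lt_of_lt_of_le h (Nat.pow_le_pow_right (by norm_num) hk))]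
      simp)).symm

lemma walsh_zero (x : G) : walsh 0 x = 1 := by simp [walsh]

lemma walsh_two_pow (j : ℕ) (x : G) : walsh (2^j) x = (-1 : ℝ) ^ ((x j).val) := by
  rw [walsh_eq_range (2^j) (j+1) (by exact Nat.pow_lt_pow_right (by norm_num) (Nat.lt_succ_self j)) x]
  rw [Finset.prod_range_succ]
  rw [Finset.prod_eq_one (fun k hk => by
    rw [Nat.testBit_two_pow_of_ne (by simp at hk; omega)]; simp)]
  simp [Nat.testBit_two_pow_self]

lemma walsh_sq (m : ℕ) (x : G) : walsh m x * walsh m x = 1 := by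
  unfold walsh
  rw [← Finset.prod_mul_distrib]
  apply Finset.prod_eq_one
  intro k _
  split
  · rw [← pow_add]; exact Even.neg_one_pow ⟨(x k).val, rfl⟩
  · norm_num

lemma walsh_eq_one_or_neg_one (m : ℕ) (x : G) : walsh m x = 1 ∨ walsh m x = -1 :=
  mul_self_eq_one_iff.mp (walsh_sq m x)

lemma abs_walsh (m : ℕ) (x : G) : |walsh m x| = 1 := by
  rcases walsh_eq_one_or_neg_one m x with h | h <;> rw [h] <;> norm_num

lemma walsh_eq_one (m : ℕ) (x : G) (h : ∀ k, m.testBit k = true → x k = 0) : walsh m x = 1 := by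
  unfold walsh
  apply Finset.prod_eq_one
  intro k _
  split
  · next hb => rw [h k hb]; simp
  · rfl

lemma walsh_add (j r : ℕ) (hr : r < 2^j) (x : G) :
    walsh (2^j + r) x = walsh (2^j) x * walsh r x := by
  have h2 : 2^j + r < 2^(j+1) := by rw [pow_succ]; omega
  rw [walsh_eq_range (2^j+r) (j+1) h2 x, walsh_eq_range (2^j) (j+1) (by
      exact Nat.pow_lt_pow_right (by norm_num) (Nat.lt_succ_self j)) x,
    walsh_eq_range r (j+1) (lt_trans hr (Nat.pow_lt_pow_right (by norm_num) (Nat.lt_succ_self j))) x,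
    ← Finset.prod_mul_distrib]
  apply Finset.prod_congr rfl
  intro k hk
  simp only [Finset.mem_range] at hk
  rcases lt_trichotomy k j with hkj | hkj | hkj
  · rw [Nat.testBit_two_pow_add_gt hkj, Nat.testBit_two_pow_of_ne (by omega)]
    simp
  · subst hkj
    rw [Nat.testBit_two_pow_add_eq, Nat.testBit_lt_two_pow hr, Nat.testBit_two_pow_self]
    simp
  · omega

-- ### Dirichlet lemmas

lemma Dir_add (j r : ℕ) (hr : r ≤ 2^j) (x : G) :
    Dir (2^j + r) x = Dir (2^j) x + walsh (2^j) x * Dir r x := by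
  unfold Dir
  rw [Finset.sum_range_add]
  congr 1
  rw [Finset.mul_sum]
  apply Finset.sum_congr rfl
  intro s hs
  simp only [Finset.mem_range] at hs
  exact walsh_add j s (lt_of_lt_of_le hs hr) x

lemma Dir_two_pow (j : ℕ) (x : G) :
    Dir (2^j) x = if ∀ i < j, x i = 0 then (2^j : ℝ) else 0 := by
  induction j with
  | zero => norm_num [Dir, walsh_zero]
  | succ j ih =>
    have : (2:ℕ)^(j+1) = 2^j + 2^j := by rw [pow_succ]; omega
    rw [this, Dir_add j (2^j) le_rfl x, ih, walsh_two_pow]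
    by_cases h : ∀ i < j, x i = 0
    · rw [if_pos h]
      by_cases hxj : x j = 0
      · have hall : ∀ i < j + 1, x i = 0 := by
          intro i hi
          rcases Nat.lt_succ_iff_lt_or_eq.mp hi with hi' | hi'
          · exact h i hi'
          · subst hi'; exact hxj
        rw [if_pos hall, hxj]
        simp [ZMod.val_zero]
        ring
      · have hx1 : x j = 1 := by
          have := ZMod.val_lt (x j)
          have h0 : (x j).val ≠ 0 := fun hc => hxj (by
            have := ZMod.val_cast_of_lt (show 0 < 2 by norm_num)
            exact (ZMod.val_eq_zero (x j)).mp hc)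
          have : (x j).val = 1 := by omega
          have := (ZMod.val_eq_one (by norm_num) (x j)).mp this
          exact this
        rw [if_neg (fun hall => hxj (hall j (Nat.lt_succ_self j))), hx1]
        norm_num [ZMod.val_one]
    · rw [if_neg h, if_neg (fun hall => h (fun i hi => hall i (Nat.lt_succ_of_lt hi)))]
      ring

lemma Dir_low (i k : ℕ) (x : G) (h0 : ∀ l < i, x l = 0) (hk : k ≤ 2^i) : Dir k x = k := by
  unfold Dir
  have h : ∀ s ∈ Finset.range k, walsh s x = 1 := by
    intro s hs
    simp only [Finset.mem_range] at hs
    refine walsh_eq_one s x (fun l hl => h0 l ?_)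
    have h2l : (2:ℕ)^l ≤ s := Nat.ge_two_pow_of_testBit hl
    have hsi : s < 2^i := lt_of_lt_of_le hs hk
    exact (Nat.pow_lt_pow_iff_right (by norm_num)).mp (lt_of_le_of_lt h2l hsi)
  rw [Finset.sum_congr rfl h]
  simp

lemma bits_sum (i k : ℕ) : (∑ j ∈ Finset.range i, bit k j * 2^j) = k % 2^i := by
  induction i with
  | zero => simp [Nat.mod_one]
  | succ i ih =>
    rw [Finset.sum_range_succ, ih, Nat.mod_pow_succ]
    congr 1
    unfold bit
    rw [Nat.testBit_eq_decide_div_mod_eq]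
    rcases Nat.mod_two_eq_zero_or_one (k / 2^i) with h | h <;> rw [h] <;> simp [Nat.mul_comm]

lemma walsh_congr (m B : ℕ) (h : m < 2^B) (x y : G) (hxy : ∀ l < B, x l = y l) :
    walsh m x = walsh m y := by
  rw [walsh_eq_range m B h x, walsh_eq_range m B h y]
  exact Finset.prod_congr rfl fun k hk => by rw [hxy k (Finset.mem_range.mp hk)]

lemma Dir_congr (k B : ℕ) (h : k ≤ 2^B) (x y : G) (hxy : ∀ l < B, x l = y l) :
    Dir k x = Dir k y := by
  unfold Dir
  exact Finset.sum_congr rfl fun s hs =>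
    walsh_congr s B (lt_of_lt_of_le (Finset.mem_range.mp hs) h) x y hxy

lemma val_one_of_ne_zero {a : ZMod 2} (h : a = 1) : (a).val = 1 := by subst h; decide

lemma Dir_eq (x : G) (i : ℕ) (h0 : ∀ l < i, x l = 0) (h1 : x i = 1) (k : ℕ) :
    Dir k x = walsh k x * (((k % 2^i : ℕ) : ℝ) - (bit k i : ℝ) * 2^i) := by
  induction k using Nat.strong_induction_on with
  | _ k IH =>
  rcases Nat.eq_zero_or_pos k with rfl | hk
  · simp [Dir, bit]
  · set L := k.log2 with hL
    have hL1 : 2^L ≤ k := Nat.log2_self_le (Nat.pos_iff_ne_zero.mp hk)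
    have hL2 : k < 2^(L+1) := Nat.lt_log2_self
    set r := k - 2^L with hr
    have hkr : k = 2^L + r := by omega
    have hrL : r < 2^L := by rw [pow_succ] at hL2; omega
    have hbits_small : ∀ s : ℕ, s < 2^i → walsh s x = 1 := by
      intro s hs
      refine walsh_eq_one s x (fun l hl => h0 l ?_)
      have h2l : (2:ℕ)^l ≤ s := Nat.ge_two_pow_of_testBit hl
      exact (Nat.pow_lt_pow_iff_right (by norm_num)).mp (lt_of_le_of_lt h2l hs)
    rcases lt_trichotomy L i with hLi | hLi | hLi
    · -- L < i : k < 2^i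
      have hki : k < 2^i := lt_of_lt_of_le hL2 (Nat.pow_le_pow_right (by norm_num) hLi)
      rw [Dir_low i k x h0 (le_of_lt hki), hbits_small k hki,
        Nat.mod_eq_of_lt hki]
      unfold bit
      rw [Nat.testBit_lt_two_pow hki]
      simp
    · -- L = i
      subst hLi
      rw [hkr, Dir_add L r (le_of_lt hrL) x, walsh_add L r hrL x,
        Dir_two_pow, if_pos h0, walsh_two_pow, val_one_of_ne_zero h1,
        Dir_low L r x h0 (le_of_lt hrL), hbits_small r hrL]
      have hmod : (2^L + r) % 2^L = r := by
        rw [Nat.add_comm, Nat.add_mod_right, Nat.mod_eq_of_lt hrL]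
      have hbit : bit (2^L + r) L = 1 := by
        unfold bit
        rw [Nat.testBit_two_pow_add_eq, Nat.testBit_lt_two_pow hrL]
        rfl
      rw [hmod, hbit]
      push_cast
      ring
    · -- L > i
      have hrk : r < k := by omega
      have hD2L : Dir (2^L) x = 0 := by
        rw [Dir_two_pow, if_neg]
        intro hall
        rw [hall i hLi] at h1
        exact absurd h1.symm (by decide)
      rw [hkr, Dir_add L r (le_of_lt hrL) x, walsh_add L r hrL x, hD2L, IH r hrk]
      have hmod : (2^L + r) % 2^i = r % 2^i := by
        have h2L : (2:ℕ)^L = 2^i * 2^(L-i) := by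
          rw [← pow_add]
          congr 1
          omega
        rw [Nat.add_comm, h2L, Nat.add_mul_mod_self_left]
      have hbit : bit (2^L + r) i = bit r i := by
        unfold bit; rw [Nat.testBit_two_pow_add_gt hLi]
      rw [hmod, hbit]
      ring

-- ### measure side

lemma floor_aux (j c : ℕ) (hc : 0 < c) (y : ℝ) (h1 : (j:ℝ)/c ≤ y) (h2 : y < ((j:ℝ)+1)/c) :
    ⌊y⌋ = (j / c : ℕ) := by
  have hc' : (0:ℝ) < c := by exact_mod_cast hc
  rw [Int.floor_eq_iff]
  constructor
  · calc ((j / c : ℕ) : ℝ) ≤ (j:ℝ)/c := by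
          rw [le_div_iff₀ hc']
          exact_mod_cast Nat.div_mul_le_self j c
      _ ≤ y := h1
  · have : ((j:ℝ)+1)/c ≤ ((j/c : ℕ) : ℝ) + 1 := by
      rw [div_le_iff₀ hc']
      have hlt : j + 1 ≤ (j/c + 1) * c := by
        have ha := Nat.div_add_mod j c
        have hb := Nat.mod_lt j hc
        nlinarith
      exact_mod_cast hlt
    push_cast
    exact lt_of_lt_of_le h2 this

lemma toG_apply (K l j : ℕ) (x : ℝ) (hl : l < K) (h1 : (j:ℝ)/2^K ≤ x)
    (h2 : x < ((j:ℝ)+1)/2^K) :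
    toG x l = ((j / 2^(K-1-l) : ℕ) : ZMod 2) := by
  have hsplit : (2:ℝ)^K = 2^(K-1-l) * 2^(l+1) := by
    rw [← pow_add]
    congr 1
    omega
  have hc : (0:ℝ) < 2^(K-1-l) := by positivity
  have hd : (0:ℝ) < 2^(l+1) := by positivity
  have key : ⌊x * 2^(l+1)⌋ = ((j / 2^(K-1-l) : ℕ) : ℤ) := by
    apply floor_aux j (2^(K-1-l)) (Nat.pow_pos (by norm_num))
    · push_cast
      rw [div_le_iff₀ hc] at *
      rw [hsplit] at h1
      rw [div_le_iff₀ (by positivity)] at h1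
      nlinarith
    · push_cast
      rw [hsplit] at h2
      rw [lt_div_iff₀ hc]
      rw [lt_div_iff₀ (by positivity)] at h2
      nlinarith
  unfold toG
  rw [key]
  norm_cast

lemma measurable_toG : Measurable toG := by
  apply measurable_pi_lambda
  intro n
  exact (measurable_of_countable _).comp ((measurable_id.mul_const _).floor)

lemma measurable_walsh (m : ℕ) : Measurable (walsh m) := by
  unfold walsh
  apply Finset.measurable_prod
  intro k _
  by_cases h : m.testBit k
  · simp only [h, if_true]
    exact (measurable_of_countable (fun v : ZMod 2 => (-1:ℝ)^v.val)).comp (measurable_pi_apply k)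
  · simp only [h, if_false]
    exact measurable_const

lemma measurable_Dir (n : ℕ) : Measurable (Dir n) := by
  unfold Dir
  exact Finset.measurable_sum _ (fun k _ => measurable_walsh k)

lemma integral_muG (K : ℕ) (F : G → ℝ) (hmeas : Measurable F)
    (hF : ∀ x y : G, (∀ l < K, x l = y l) → F x = F y) :
    ∫ x, F x ∂muG = (∑ j ∈ Finset.range (2^K), F (toG ((j:ℝ) / 2^K))) / 2^K := by
  have h2K : (0:ℝ) < 2^K := by positivity
  rw [muG, integral_map measurable_toG.aemeasurable hmeas.aestronglyMeasurable]
  have hunion : Set.Ico (0:ℝ) 1 = ⋃ j ∈ Finset.range (2^K), Set.Ico ((j:ℝ)/2^K) (((j:ℝ)+1)/2^K) := by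
    ext x
    simp only [Set.mem_Ico, Set.mem_iUnion, Finset.mem_range]
    constructor
    · rintro ⟨hx0, hx1⟩
      have hnn : 0 ≤ ⌊x * 2^K⌋ := Int.floor_nonneg.mpr (by positivity)
      refine ⟨⌊x * 2^K⌋.toNat, ⟨?_, ?_, ?_⟩⟩
      · have hlt : ⌊x * 2^K⌋ < ((2^K : ℕ) : ℤ) := by
          apply Int.floor_lt.mpr
          push_cast
          nlinarith
        omega
      · rw [div_le_iff₀ h2K]
        have hcast : ((⌊x * 2^K⌋.toNat : ℕ) : ℝ) = ((⌊x * 2^K⌋ : ℤ) : ℝ) := by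
          exact_mod_cast Int.toNat_of_nonneg hnn
        rw [hcast]
        exact Int.floor_le _
      · rw [lt_div_iff₀ h2K]
        have hcast : ((⌊x * 2^K⌋.toNat : ℕ) : ℝ) = ((⌊x * 2^K⌋ : ℤ) : ℝ) := by
          exact_mod_cast Int.toNat_of_nonneg hnn
        rw [hcast]
        exact Int.lt_floor_add_one _
    · rintro ⟨j, hj, hj1, hj2⟩
      constructor
      · exact le_trans (by positivity) hj1
      · have : ((j:ℝ)+1)/2^K ≤ 1 := by
          rw [div_le_one h2K]
          exact_mod_cast Nat.succ_le_of_lt hj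
        linarith
  have hlt' : ∀ j : ℕ, (j:ℝ)/2^K < ((j:ℝ)+1)/2^K := by
    intro j
    gcongr
    linarith
  have hEqOn : ∀ j : ℕ, Set.EqOn (fun x : ℝ => F (toG x))
      (fun _ => F (toG ((j:ℝ)/2^K))) (Set.Ico ((j:ℝ)/2^K) (((j:ℝ)+1)/2^K)) := by
    intro j x hx
    refine hF _ _ (fun l hl => ?_)
    rw [toG_apply K l j x hl hx.1 hx.2, toG_apply K l j ((j:ℝ)/2^K) hl le_rfl (hlt' j)]
  have hd : ∀ i j : ℕ, i < j → Disjoint (Set.Ico ((i:ℝ)/2^K) (((i:ℝ)+1)/2^K))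
      (Set.Ico ((j:ℝ)/2^K) (((j:ℝ)+1)/2^K)) := by
    intro i j hij
    apply Set.Ico_disjoint_Ico.mpr
    refine le_trans (min_le_left _ _) (le_trans ?_ (le_max_right _ _))
    gcongr
    exact_mod_cast hij
  rw [hunion, integral_biUnion_finset _ (fun j _ => measurableSet_Ico)
      (fun a _ b _ hab => by
        rcases lt_or_gt_of_ne hab with h | h
        · exact hd a b h
        · exact (hd b a h).symm)
      (fun j _ => by
        refine MeasureTheory.IntegrableOn.congr_fun ?_ (hEqOn j).symm measurableSet_Ico
        exact integrableOn_const measure_Ico_lt_top.ne)]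
  have hvol : ∀ j : ℕ, (volume (Set.Ico ((j:ℝ)/2^K) (((j:ℝ)+1)/2^K))).toReal = 1/2^K := by
    intro j
    rw [Real.volume_Ico, ENNReal.toReal_ofReal (by linarith [hlt' j])]
    field_simp
    ring
  rw [Finset.sum_congr rfl (fun j _ => by
    rw [MeasureTheory.setIntegral_congr_fun measurableSet_Ico (hEqOn j),
      MeasureTheory.setIntegral_const, measureReal_def, hvol j, smul_eq_mul])]
  rw [← Finset.mul_sum]
  ring

-- ### combinatorial helpers

lemma abs_add_add_abs_sub (a b : ℝ) : |a + b| + |a - b| = 2 * max |a| |b| := by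
  rcases le_total |a| |b| with h | h
  · rw [max_eq_right h]
    have ha1 : -|b| ≤ a := le_trans (neg_le_neg h) (neg_abs_le a)
    have ha2 : a ≤ |b| := (le_abs_self a).trans h
    rcases le_total 0 b with hb | hb
    · rw [abs_of_nonneg hb] at ha1 ha2 ⊢
      rw [abs_of_nonneg (by linarith : (0:ℝ) ≤ a + b), abs_of_nonpos (by linarith : a - b ≤ 0)]
      ring
    · rw [abs_of_nonpos hb] at ha1 ha2 ⊢
      rw [abs_of_nonpos (by linarith : a + b ≤ 0), abs_of_nonneg (by linarith : (0:ℝ) ≤ a - b)]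
      ring
  · rw [max_eq_left h]
    have hb1 : -|a| ≤ b := le_trans (neg_le_neg h) (neg_abs_le b)
    have hb2 : b ≤ |a| := (le_abs_self b).trans h
    rcases le_total 0 a with ha | ha
    · rw [abs_of_nonneg ha] at hb1 hb2 ⊢
      rw [abs_of_nonneg (by linarith : (0:ℝ) ≤ a + b), abs_of_nonneg (by linarith : (0:ℝ) ≤ a - b)]
      ring
    · rw [abs_of_nonpos ha] at hb1 hb2 ⊢
      rw [abs_of_nonpos (by linarith : a + b ≤ 0), abs_of_nonpos (by linarith : a - b ≤ 0)]
      ring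

lemma sum_range_two_mul (M : ℕ) (f : ℕ → ℝ) :
    ∑ j ∈ Finset.range (2*M), f j = ∑ u ∈ Finset.range M, (f (2*u) + f (2*u+1)) := by
  induction M with
  | zero => simp
  | succ M ih =>
    rw [Nat.mul_succ, Finset.sum_range_add, ih, Finset.sum_range_succ]
    simp [Finset.sum_range_succ]

lemma sum_Ico_pow_split (N : ℕ) (g : ℕ → ℝ) :
    ∑ u ∈ Finset.Ico 1 (2^N), g u
      = ∑ p ∈ Finset.range N, ∑ u ∈ Finset.Ico (2^p) (2^(p+1)), g u := by
  induction N with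
  | zero => simp
  | succ N ih =>
    rw [Finset.sum_range_succ, ← ih,
      Finset.sum_Ico_consecutive g Nat.one_le_two_pow
        (Nat.pow_le_pow_right (by norm_num) (Nat.le_succ N))]

lemma tdig_le_one (t : ℝ) (j : ℕ) : tdig t j ≤ 1 := by
  unfold tdig
  rcases Int.emod_two_eq_zero_or_one (⌊t * 2^(j+1)⌋) with h | h <;> simp [h]

lemma mOf_lt (t : ℝ) (N : ℕ) : mOf t N < 2^N := by
  have h2 : ∑ i ∈ Finset.range N, 2^i = 2^N - 1 := by
    induction N with
    | zero => simp
    | succ N ih =>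
      rw [Finset.sum_range_succ, ih, pow_succ]
      have := Nat.one_le_two_pow (n := N)
      omega
  have h1 : mOf t N ≤ ∑ i ∈ Finset.range N, 2^i :=
    Finset.sum_le_sum (fun i _ => by
      calc tdig t (i+1) * 2^i ≤ 1 * 2^i := Nat.mul_le_mul_right _ (tdig_le_one t (i+1))
        _ = 2^i := one_mul _)
  have := Nat.one_le_two_pow (n := N)
  omega

lemma alpha_cast (k i : ℕ) : ((alpha k i : ℤ) : ℝ)
    = |((k % 2^i : ℕ) : ℝ) - (bit k i : ℝ) * 2^i| := by
  unfold alpha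
  rw [Int.cast_abs]
  have hs : ((k % 2^i : ℕ) : ℝ) = ∑ j ∈ Finset.range i, (bit k j : ℝ) * 2^j := by
    rw [← bits_sum i k]
    push_cast
    rfl
  rw [hs]
  push_cast
  rfl

lemma bit_eq_low (N n' j : ℕ) (hj : j < N) :
    bit (2^N + n') j = bit n' j := by
  unfold bit
  rw [Nat.testBit_two_pow_add_gt hj]

lemma alpha_low (N n' i : ℕ) (hi : i < N) :
    alpha (2^N + n') i = alpha n' i := by
  unfold alpha
  rw [bit_eq_low N n' i hi,
    Finset.sum_congr rfl (fun j hj => by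
      rw [bit_eq_low N n' j (lt_trans (Finset.mem_range.mp hj) hi)])]

lemma toG_digit (K l j : ℕ) (hl : l < K) :
    toG ((j:ℝ)/2^K) l = ((bit j (K-1-l) : ℕ) : ZMod 2) := by
  have hlt : (j:ℝ)/2^K < ((j:ℝ)+1)/2^K := by
    gcongr
    linarith
  rw [toG_apply K l j _ hl le_rfl hlt]
  have hb : (j / 2^(K-1-l)) % 2 = bit j (K-1-l) := by
    unfold bit
    rw [Nat.testBit_eq_decide_div_mod_eq]
    rcases Nat.mod_two_eq_zero_or_one (j/2^(K-1-l)) with h | h <;> rw [h] <;> simp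
  rw [← ZMod.natCast_mod (j / 2^(K-1-l)) 2, hb]

lemma bit_two_mul_succ (u d : ℕ) : bit (2*u) (d+1) = bit u d := by
  unfold bit
  rw [Nat.testBit_add_one]
  have h : 2*u/2 = u := by omega
  rw [h]

lemma bit_two_mul_add_one_succ (u d : ℕ) : bit (2*u+1) (d+1) = bit u d := by
  unfold bit
  rw [Nat.testBit_add_one]
  have h : (2*u+1)/2 = u := by omega
  rw [h]

lemma bit_two_mul_zero (u : ℕ) : bit (2*u) 0 = 0 := by
  unfold bit
  rw [Nat.testBit_zero]
  have h : (2*u) % 2 = 0 := by omega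
  simp [h]

lemma bit_two_mul_add_one_zero (u : ℕ) : bit (2*u+1) 0 = 1 := by
  unfold bit
  rw [Nat.testBit_zero]
  have h : (2*u+1) % 2 = 1 := by omega
  simp [h]

lemma walsh_small_eq_one (i s : ℕ) (x : G) (h0 : ∀ l < i, x l = 0) (hs : s < 2^i) :
    walsh s x = 1 := by
  refine walsh_eq_one s x (fun l hl => h0 l ?_)
  have h2l : (2:ℕ)^l ≤ s := Nat.ge_two_pow_of_testBit hl
  exact (Nat.pow_lt_pow_iff_right (by norm_num)).mp (lt_of_le_of_lt h2l hs)

lemma Dconj_decomp (t : ℝ) (N n n' : ℕ) (hn' : n = 2^N + n') (hle : n' ≤ 2^N) (x : G) :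
    Dconj t N n x = (Dir (2^N) x - 2 * walsh (mOf t N) x * Dir (mOf t N) x)
      + (-1:ℝ)^((x N).val) * ((1 - 2*(tdig t (N+1) : ℝ)) * Dir n' x) := by
  unfold Dconj
  rw [hn', Dir_add N n' hle x, walsh_two_pow]
  ring

/-- Exact formula for the Lebesgue constant of the conjugate transform. -/
theorem Leb_formula (t : ℝ) (ht : t ∈ Set.Ico (0:ℝ) 1) (N n n' : ℕ)
    (h1 : 2^N ≤ n) (h2 : n < 2^(N+1)) (hn' : n = 2^N + n') (hn'lt : n' < 2^N) :
    Leb t N n =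
      (∑ i ∈ Finset.range N, max (alpha n i : ℝ) (2 * (alpha (mOf t N) i : ℝ)) / 2^(i+1))
      + |2^(N+1) - (n:ℝ) - 2*(mOf t N : ℝ) + 2*(tdig t (N+1) : ℝ)*((n:ℝ) - 2^N)| / 2^(N+1)
      + |(n:ℝ) - 2*(mOf t N : ℝ) - 2*(tdig t (N+1) : ℝ)*((n:ℝ) - 2^N)| / 2^(N+1) := by
  have hm : mOf t N < 2^N := mOf_lt t N
  set m := mOf t N with hmdef
  set K := N + 1 with hK
  set ε : ℝ := (tdig t (N+1) : ℝ) with hεdef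
  have hεabs : |1 - 2*ε| = 1 := by
    rcases Nat.le_one_iff_eq_zero_or_eq_one.mp (tdig_le_one t (N+1)) with h | h <;>
      rw [hεdef, h] <;> norm_num
  have hmK : m < 2^K := lt_trans hm (Nat.pow_lt_pow_right (by norm_num) (Nat.lt_succ_self N))
  have hNK : (2:ℕ)^N ≤ 2^K := Nat.pow_le_pow_right (by norm_num) (Nat.le_succ N)
  have hn'N : n' ≤ 2^N := le_of_lt hn'lt
  -- measurability
  have hDmeas : Measurable (fun x => |Dconj t N n x|) := by
    unfold Dconj
    exact (((measurable_Dir n).sub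
      (((measurable_walsh m).const_mul 2).mul (measurable_Dir m))).sub
      (((measurable_Dir n).sub (measurable_Dir (2^N))).const_mul _)).abs
  have hcongr : ∀ x y : G, (∀ l < K, x l = y l) → |Dconj t N n x| = |Dconj t N n y| := by
    intro x y h
    unfold Dconj
    rw [Dir_congr n K (le_of_lt h2) x y h, Dir_congr m K (le_of_lt hmK) x y h,
      walsh_congr m K hmK x y h, Dir_congr (2^N) K hNK x y h]
  have hint := integral_muG K (fun x => |Dconj t N n x|) hDmeas hcongr
  rw [show Leb t N n = ∫ x, |Dconj t N n x| ∂muG from rfl, hint]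
  clear hint hDmeas hcongr
  -- abbreviations
  set Y : ℕ → G := fun j => toG ((j:ℝ)/2^K) with hY
  set fA : ℕ → ℝ := fun u => Dir (2^N) (Y (2*u)) - 2 * walsh m (Y (2*u)) * Dir m (Y (2*u)) with hfA
  set fB : ℕ → ℝ := fun u => (1-2*ε) * Dir n' (Y (2*u)) with hfB
  -- digits of Y j
  have hYd : ∀ j l : ℕ, l < K → Y j l = ((bit j (K-1-l) : ℕ) : ZMod 2) := by
    intro j l hl
    exact toG_digit K l j hl
  -- pairing
  have hpair : ∀ u : ℕ, |Dconj t N n (Y (2*u))| + |Dconj t N n (Y (2*u+1))|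
      = 2 * max |fA u| |fB u| := by
    intro u
    have hagree : ∀ l < N, Y (2*u+1) l = Y (2*u) l := by
      intro l hl
      rw [hYd (2*u+1) l (by omega), hYd (2*u) l (by omega)]
      have hd : K - 1 - l = (N - 1 - l) + 1 := by omega
      rw [hd, bit_two_mul_succ, bit_two_mul_add_one_succ]
    have hYN : Y (2*u) N = 0 := by
      rw [hYd (2*u) N (by omega), show K - 1 - N = 0 by omega, bit_two_mul_zero]
      simp
    have hZN : Y (2*u+1) N = 1 := by
      rw [hYd (2*u+1) N (by omega), show K - 1 - N = 0 by omega, bit_two_mul_add_one_zero]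
      simp
    rw [Dconj_decomp t N n n' hn' hn'N (Y (2*u)), Dconj_decomp t N n n' hn' hn'N (Y (2*u+1))]
    rw [Dir_congr (2^N) N le_rfl (Y (2*u+1)) (Y (2*u)) hagree,
      walsh_congr m N hm (Y (2*u+1)) (Y (2*u)) hagree,
      Dir_congr m N (le_of_lt hm) (Y (2*u+1)) (Y (2*u)) hagree,
      Dir_congr n' N hn'N (Y (2*u+1)) (Y (2*u)) hagree,
      hYN, hZN]
    have hv0 : ((0 : ZMod 2)).val = 0 := rfl
    have hv1 : ((1 : ZMod 2)).val = 1 := rfl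
    rw [hv0, hv1, pow_zero, pow_one, ← abs_add_add_abs_sub]
    rw [hfA, hfB, hεdef]
    rw [← hmdef]
    ring_nf
  -- evaluation at u = 0
  have hzero : 2 * max |fA 0| |fB 0| = |fA 0 + fB 0| + |fA 0 - fB 0| :=
    (abs_add_add_abs_sub _ _).symm
  have hY0 : ∀ l, l < N → Y (2*0) l = 0 := by
    intro l hl
    rw [hYd (2*0) l (by omega)]
    have : bit (2*0) (K-1-l) = 0 := by simp [bit]
    rw [this]
    simp
  have hA0 : fA 0 = 2^N - 2*(m:ℝ) := by
    simp only [hfA]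
    rw [Dir_two_pow, if_pos hY0, walsh_small_eq_one N m _ hY0 hm,
      Dir_low N m _ hY0 (le_of_lt hm)]
    push_cast
    ring
  have hB0 : fB 0 = (1-2*ε) * (n':ℝ) := by
    simp only [hfB]
    rw [Dir_low N n' _ hY0 hn'N]
  -- evaluation on dyadic blocks
  have hblock : ∀ p : ℕ, p < N → ∀ u : ℕ, u ∈ Finset.Ico (2^p) (2^(p+1)) →
      2 * max |fA u| |fB u|
        = 2 * max ((alpha n (N-1-p) : ℝ)) (2*((alpha m (N-1-p) : ℝ))) := by
    intro p hp u hu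
    rw [Finset.mem_Ico] at hu
    set i := N - 1 - p with hi
    have hiN : i < N := by omega
    have h0 : ∀ l, l < i → Y (2*u) l = 0 := by
      intro l hl
      rw [hYd (2*u) l (by omega), show K-1-l = (N-1-l)+1 from by omega, bit_two_mul_succ]
      have hub : u < 2^(N-1-l) :=
        lt_of_lt_of_le hu.2 (Nat.pow_le_pow_right (by norm_num) (by omega))
      unfold bit
      rw [Nat.testBit_lt_two_pow hub]
      simp
    have h1 : Y (2*u) i = 1 := by
      rw [hYd (2*u) i (by omega), show K-1-i = p+1 from by omega, bit_two_mul_succ]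
      have hdiv : u / 2^p = 1 := by
        apply Nat.div_eq_of_lt_le
        · simpa using hu.1
        · have h2 : (1+1) * 2^p = 2^(p+1) := by ring
          rw [h2]
          exact hu.2
      unfold bit
      rw [Nat.testBit_eq_decide_div_mod_eq, hdiv]
      norm_num
    have hDN : Dir (2^N) (Y (2*u)) = 0 := by
      rw [Dir_two_pow, if_neg]
      intro hall
      have hcontra := hall i hiN
      rw [h1] at hcontra
      exact (by decide : (1 : ZMod 2) ≠ 0) hcontra
    have hDm := Dir_eq (Y (2*u)) i h0 h1 m
    have hDn' := Dir_eq (Y (2*u)) i h0 h1 n'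
    have hww := walsh_sq m (Y (2*u))
    have hfAu : |fA u| = 2 * (alpha m i : ℝ) := by
      simp only [hfA]
      rw [hDN, hDm]
      rw [show (0:ℝ) - 2 * walsh m (Y (2*u)) * (walsh m (Y (2*u)) *
          (((m % 2^i : ℕ) : ℝ) - (bit m i : ℝ) * 2^i))
        = (walsh m (Y (2*u)) * walsh m (Y (2*u)))
          * (-(2 * (((m % 2^i : ℕ) : ℝ) - (bit m i : ℝ) * 2^i))) from by ring,
        hww, one_mul, abs_neg, abs_mul, ← alpha_cast]
      norm_num
    have hfBu : |fB u| = (alpha n i : ℝ) := by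
      simp only [hfB]
      rw [hDn', abs_mul, abs_mul, hεabs, abs_walsh, one_mul, one_mul, ← alpha_cast]
      rw [hn', alpha_low N n' i hiN]
    rw [hfAu, hfBu, max_comm]
  -- assemble
  rw [show (2:ℕ)^K = 2*2^N from by rw [hK]; ring]
  rw [sum_range_two_mul (2^N) (fun j => |Dconj t N n (toG ((j:ℝ)/2^K))|)]
  rw [Finset.sum_congr rfl (fun u _ => by simpa only [hY] using hpair u)]
  rw [Finset.range_eq_Ico,
    ← Finset.sum_Ico_consecutive (fun u => 2*max |fA u| |fB u|) (Nat.zero_le 1)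
      Nat.one_le_two_pow]
  have h01 : ∑ u ∈ Finset.Ico 0 1, (2*max |fA u| |fB u|) = 2 * max |fA 0| |fB 0| := by
    rw [← Finset.range_eq_Ico, Finset.sum_range_one]
  rw [h01, sum_Ico_pow_split N (fun u => 2*max |fA u| |fB u|)]
  rw [Finset.sum_congr rfl (fun p hp => Finset.sum_congr rfl
    (fun u hu => hblock p (Finset.mem_range.mp hp) u hu))]
  rw [Finset.sum_congr rfl (fun p (hp : p ∈ Finset.range N) => by
    rw [Finset.sum_const, Nat.card_Ico, nsmul_eq_mul,
      show (2:ℕ)^(p+1) - 2^p = 2^p from by rw [pow_succ]; omega])]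
  -- now reflect the p-sum
  rw [← Finset.sum_range_reflect
    (fun p => (((2:ℕ)^p : ℕ) : ℝ) * (2 * max ((alpha n (N-1-p) : ℝ)) (2*((alpha m (N-1-p) : ℝ))))) N]
  rw [hzero, hA0, hB0]
  have hKne : ((2:ℝ)^K) ≠ 0 := by positivity
  rw [div_eq_iff hKne]
  -- identify the two boundary terms
  have hnR : (n:ℝ) = 2^N + (n':ℝ) := by rw [hn']; push_cast; ring
  have hc1 : |2^(N+1) - (n:ℝ) - 2*(m:ℝ) + 2*ε*((n:ℝ) - 2^N)|
      = |2^N - 2*(m:ℝ) - (1-2*ε)*(n':ℝ)| := by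
    rw [show (2:ℝ)^(N+1) - (n:ℝ) - 2*(m:ℝ) + 2*ε*((n:ℝ) - 2^N)
      = 2^N - 2*(m:ℝ) - (1-2*ε)*(n':ℝ) from by rw [hnR]; rw [pow_succ]; ring]
  have hc2 : |(n:ℝ) - 2*(m:ℝ) - 2*ε*((n:ℝ) - 2^N)|
      = |2^N - 2*(m:ℝ) + (1-2*ε)*(n':ℝ)| := by
    rw [show (n:ℝ) - 2*(m:ℝ) - 2*ε*((n:ℝ) - 2^N)
      = 2^N - 2*(m:ℝ) + (1-2*ε)*(n':ℝ) from by rw [hnR]; ring]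
  rw [hc1, hc2]
  -- sum identity
  have hsum : ∑ p ∈ Finset.range N,
      (((2:ℕ)^(N-1-p) : ℕ) : ℝ) * (2 * max ((alpha n (N-1-(N-1-p)) : ℝ)) (2*((alpha m (N-1-(N-1-p)) : ℝ))))
      = (∑ i ∈ Finset.range N, max ((alpha n i : ℝ)) (2*((alpha m i : ℝ))) / 2^(i+1)) * 2^K := by
    rw [Finset.sum_mul]
    apply Finset.sum_congr rfl
    intro i hi
    have hiN : i < N := Finset.mem_range.mp hi
    rw [show N-1-(N-1-i) = i from by omega]
    rw [div_mul_eq_mul_div, eq_div_iff (by positivity : ((2:ℝ)^(i+1)) ≠ 0)]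
    have hpow : ((2:ℝ))^(N-1-i) * 2 * 2^(i+1) = 2^K := by
      rw [show K = (N-1-i) + 1 + (i+1) from by omega, pow_add, pow_add, pow_one]
      ring
    push_cast
    rw [← hpow]
    ring
  rw [hsum]
  field_simp
  ring
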